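/- Let k ≥ 2 and suppose n = (k(k−1)+1)m for a positive integer m with m ≡ 0 (mod k). Then every k-k-XOR-BN on n nodes has a control node set of size at most [1 − (k−1)/(k(k²−k+1))]·n. -/

import Mathlib

namespace BN

variable {n : ℕ}

/-- The Boolean function `f` depends on input `j`. -/
def Depends (f : (Fin n → Bool) → Bool) (j : Fin n) : Prop :=
  ∃ x : Fin n → Bool, f (Function.update x j (!(x j))) ≠ f x

/-- The set of incoming nodes of node `i` (Γ⁻). -/
def inSet (F : Fin n → (Fin n → Bool) → Bool) (i : Fin n) : Set (Fin n) :=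
  {j | Depends (F i) j}

/-- The set of outgoing nodes of node `i` (Γ⁺). -/
def outSet (F : Fin n → (Fin n → Bool) → Bool) (i : Fin n) : Set (Fin n) :=
  {j | Depends (F j) i}

/-- The controlled trajectory: nodes in `U` get an xor-control signal. -/
def traj (F : Fin n → (Fin n → Bool) → Bool) (U : Finset (Fin n))
    (u : ℕ → Fin n → Bool) (x0 : Fin n → Bool) : ℕ → Fin n → Bool
  | 0 => x0
  | t + 1 => fun i =>
      if i ∈ U then Bool.xor (u t i) (F i (traj F U u x0 t))
      else F i (traj F U u x0 t)

/-- `U` is a control node set: any initial state can be driven to any target state. -/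
def IsControlSet (F : Fin n → (Fin n → Bool) → Bool) (U : Finset (Fin n)) : Prop :=
  ∀ x0 xT : Fin n → Bool, ∃ t : ℕ, 1 ≤ t ∧ ∃ u : ℕ → Fin n → Bool, traj F U u x0 t = xT

/-- XOR (parity) of the inputs in `S`. -/
def xorFun (S : Finset (Fin n)) (x : Fin n → Bool) : Bool :=
  decide ((S.filter (fun j => x j = true)).card % 2 = 1)

/-- `f` is the XOR of `k` distinct inputs, or its negation. -/
def IsKXor (k : ℕ) (f : (Fin n → Bool) → Bool) : Prop :=
  ∃ S : Finset (Fin n), S.card = k ∧ (f = xorFun S ∨ f = fun x => !(xorFun S x))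

/-- A `k`-`k`-XOR-BN: each function is a `k`-input XOR (or negation) and
every node has indegree `k` and outdegree `k`. -/
def IsKKXorBN (k : ℕ) (F : Fin n → (Fin n → Bool) → Bool) : Prop :=
  (∀ i, IsKXor k (F i)) ∧ ∀ i, (inSet F i).ncard = k ∧ (outSet F i).ncard = k


lemma xorFun_congr {S : Finset (Fin n)} {x y : Fin n → Bool}
    (h : ∀ j ∈ S, x j = y j) : xorFun S x = xorFun S y := by
  unfold xorFun
  have hf : S.filter (fun j => x j = true) = S.filter (fun j => y j = true) :=
    Finset.filter_congr (fun j hj => by rw [h j hj])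
  rw [hf]

lemma xorFun_flip {S : Finset (Fin n)} {p : Fin n} (hp : p ∈ S) (x : Fin n → Bool) :
    xorFun S (Function.update x p (!(x p))) = !(xorFun S x) := by
  classical
  unfold xorFun
  have hS : S = insert p (S.erase p) := (Finset.insert_erase hp).symm
  have hpe : p ∉ S.erase p := Finset.notMem_erase p S
  set y := Function.update x p (!(x p)) with hy
  have hrest : (S.erase p).filter (fun j => y j = true)
      = (S.erase p).filter (fun j => x j = true) := by
    apply Finset.filter_congr
    intro j hj
    have hne : j ≠ p := Finset.ne_of_mem_erase hj
    simp [hy, Function.update_of_ne hne]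
  rw [hS, Finset.filter_insert, Finset.filter_insert, hrest]
  set B := (S.erase p).filter (fun j => x j = true) with hB
  have hpB : p ∉ B := fun h => hpe (Finset.mem_filter.mp h).1
  have hyp : y p = !(x p) := by simp [hy]
  cases hxp : x p with
  | false =>
      rw [hxp] at hyp
      rw [if_pos (by rw [hyp]; simp), if_neg (by simp),
        Finset.card_insert_of_notMem hpB]
      rcases Nat.mod_two_eq_zero_or_one B.card with h | h
      · have h2 : (B.card + 1) % 2 = 1 := by omega
        rw [h, h2]; simp
      · have h2 : (B.card + 1) % 2 = 0 := by omega
        rw [h, h2]; simp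
  | true =>
      rw [hxp] at hyp
      rw [if_neg (by rw [hyp]; simp), if_pos (by simp),
        Finset.card_insert_of_notMem hpB]
      rcases Nat.mod_two_eq_zero_or_one B.card with h | h
      · have h2 : (B.card + 1) % 2 = 1 := by omega
        rw [h, h2]; simp
      · have h2 : (B.card + 1) % 2 = 0 := by omega
        rw [h, h2]; simp

lemma kxor_congr {S : Finset (Fin n)} {f : (Fin n → Bool) → Bool}
    (hf : f = xorFun S ∨ f = fun x => !(xorFun S x))
    {x y : Fin n → Bool} (h : ∀ j ∈ S, x j = y j) : f x = f y := by
  rcases hf with rfl | rfl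
  · exact xorFun_congr h
  · simp [xorFun_congr h]

lemma kxor_flip {S : Finset (Fin n)} {f : (Fin n → Bool) → Bool}
    (hf : f = xorFun S ∨ f = fun x => !(xorFun S x))
    {p : Fin n} (hp : p ∈ S) (x : Fin n → Bool) :
    f (Function.update x p (!(x p))) = !(f x) := by
  rcases hf with rfl | rfl
  · exact xorFun_flip hp x
  · simp [xorFun_flip hp x]

lemma depends_iff {S : Finset (Fin n)} {f : (Fin n → Bool) → Bool}
    (hf : f = xorFun S ∨ f = fun x => !(xorFun S x))
    (q : Fin n) : Depends f q ↔ q ∈ S := by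
  constructor
  · rintro ⟨x, hx⟩
    by_contra hq
    apply hx
    apply kxor_congr hf
    intro j hj
    exact Function.update_of_ne (fun h => hq (by rw [← h]; exact hj)) _ _
  · intro hq
    refine ⟨fun _ => false, ?_⟩
    rw [kxor_flip hf hq]
    exact Bool.not_ne_self _


lemma exists_W (k : ℕ) (hk : 2 ≤ k) (S : Fin n → Finset (Fin n))
    (hScard : ∀ i, (S i).card = k)
    (hout : ∀ u : Fin n, (Finset.univ.filter fun j => u ∈ S j).card = k)
    (w : ℕ) (hw : w * (k * (2 * k - 1)) ≤ (k - 1) * n) :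
    ∃ (W : Finset (Fin n)) (ρ : Fin n → Fin n), W.card = w ∧
      (∀ j ∈ W, ρ j ∈ S j ∧ ρ j ≠ j ∧ ρ j ∉ W) ∧
      (∀ j ∈ W, ∀ j' ∈ W, j ≠ j' → ρ j ∉ S j') := by
  classical
  suffices h : ∀ t, t ≤ w → ∃ (W : Finset (Fin n)) (ρ : Fin n → Fin n), W.card = t ∧
      (∀ j ∈ W, ρ j ∈ S j ∧ ρ j ≠ j ∧ ρ j ∉ W) ∧
      (∀ j ∈ W, ∀ j' ∈ W, j ≠ j' → ρ j ∉ S j') from h w le_rfl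
  intro t
  induction t with
  | zero => exact fun _ => ⟨∅, id, by simp, by simp, by simp⟩
  | succ t ih =>
    intro htw
    obtain ⟨W, ρ, hcard, hP1, hP2⟩ := ih (le_trans (Nat.le_succ t) htw)
    have hinj : ∀ j ∈ W, ∀ j' ∈ W, ρ j = ρ j' → j = j' := by
      intro j hj j' hj' he
      by_contra hne
      exact hP2 j hj j' hj' hne (he ▸ (hP1 j' hj').1)
    set ρW := W.image ρ with hρW
    have hρWcard : ρW.card = t := by
      rw [hρW, Finset.card_image_of_injOn (fun a ha b hb => hinj a ha b hb), hcard]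
    set Φ := W ∪ W.biUnion S with hΦ
    have hSsubΦ : ∀ j ∈ W, S j ⊆ Φ := by
      intro j hj u hu
      exact Finset.mem_union_right _ (Finset.mem_biUnion.mpr ⟨j, hj, hu⟩)
    have hWsubΦ : W ⊆ Φ := Finset.subset_union_left
    have hρWΦ : ρW ⊆ Φ := by
      intro u hu
      obtain ⟨j, hj, rfl⟩ := Finset.mem_image.mp hu
      exact hSsubΦ j hj (hP1 j hj).1
    have hΦcard : Φ.card ≤ t + t * k := by
      calc Φ.card ≤ W.card + (W.biUnion S).card := Finset.card_union_le _ _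
      _ ≤ t + t * k := by
        refine add_le_add (le_of_eq hcard) ?_
        calc (W.biUnion S).card ≤ ∑ j ∈ W, (S j).card := Finset.card_biUnion_le
        _ = t * k := by
          rw [Finset.sum_congr rfl (fun j _ => hScard j), Finset.sum_const, hcard,
            smul_eq_mul]
    set Φ' := Φ \ ρW with hΦ'
    have hΦ'card : Φ'.card ≤ t * k := by
      rw [hΦ', Finset.card_sdiff_of_subset hρWΦ, hρWcard]
      omega
    set T3 := Finset.univ.filter (fun i : Fin n => i ∉ W ∧ ∃ j ∈ W, ρ j ∈ S i) with hT3
    set T4 := Finset.univ.filter (fun i : Fin n => i ∉ W ∧ (∀ j ∈ W, ρ j ∉ S i) ∧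
      ∀ u ∈ S i, u ≠ i → u ∈ Φ) with hT4
    have hT3card : T3.card ≤ t * (k - 1) := by
      have hsub : T3 ⊆ W.biUnion (fun j => (Finset.univ.filter fun i => ρ j ∈ S i) \ W) := by
        intro i hi
        simp only [hT3, Finset.mem_filter, Finset.mem_univ, true_and] at hi
        obtain ⟨hiW, j, hj, hji⟩ := hi
        exact Finset.mem_biUnion.mpr ⟨j, hj, Finset.mem_sdiff.mpr ⟨by simp [hji], hiW⟩⟩
      calc T3.card ≤ ∑ j ∈ W, ((Finset.univ.filter fun i => ρ j ∈ S i) \ W).card :=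
            le_trans (Finset.card_le_card hsub) Finset.card_biUnion_le
      _ ≤ ∑ j ∈ W, (k - 1) := by
        refine Finset.sum_le_sum (fun j hj => ?_)
        have hjmem : j ∈ (Finset.univ.filter fun i => ρ j ∈ S i) := by
          simp [(hP1 j hj).1]
        have hsub2 : (Finset.univ.filter fun i => ρ j ∈ S i) \ W ⊆
            (Finset.univ.filter fun i => ρ j ∈ S i).erase j := by
          intro a ha
          rw [Finset.mem_erase]
          obtain ⟨h1, h2⟩ := Finset.mem_sdiff.mp ha
          exact ⟨fun h => h2 (h ▸ hj), h1⟩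
        calc _ ≤ ((Finset.univ.filter fun i => ρ j ∈ S i).erase j).card :=
              Finset.card_le_card hsub2
        _ = k - 1 := by rw [Finset.card_erase_of_mem hjmem, hout]
      _ = t * (k - 1) := by rw [Finset.sum_const, hcard, smul_eq_mul]
    have hWT4 : Disjoint T4 W := by
      rw [Finset.disjoint_left]
      intro a ha haW
      simp only [hT4, Finset.mem_filter] at ha
      exact ha.2.1 haW
    set X := T4 ∪ W with hX
    have hXcard : X.card = T4.card + t := by
      rw [hX, Finset.card_union_of_disjoint hWT4, hcard]
    have hlow : ∀ i ∈ X, k - 1 ≤ (Φ'.filter (fun u => u ∈ S i)).card := by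
      intro i hi
      have hgen : ∀ v : Fin n, S i \ {v} ⊆ Φ'.filter (fun u => u ∈ S i) →
          k - 1 ≤ (Φ'.filter (fun u => u ∈ S i)).card := by
        intro v hsub
        have h1 : (S i).card ≤ (S i \ {v}).card + 1 := by
          have : S i ⊆ insert v (S i \ {v}) := by
            intro a ha
            rcases eq_or_ne a v with rfl | hne
            · exact Finset.mem_insert_self _ _
            · exact Finset.mem_insert_of_mem (Finset.mem_sdiff.mpr ⟨ha, by simp [hne]⟩)
          calc (S i).card ≤ (insert v (S i \ {v})).card := Finset.card_le_card this
          _ ≤ (S i \ {v}).card + 1 := Finset.card_insert_le _ _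
        have h2 := Finset.card_le_card hsub
        rw [hScard] at h1
        omega
      rcases Finset.mem_union.mp hi with hiT4 | hiW
      · simp only [hT4, Finset.mem_filter, Finset.mem_univ, true_and] at hiT4
        obtain ⟨hiW, hρ, hΦmem⟩ := hiT4
        refine hgen i ?_
        intro u hu
        obtain ⟨huS, hune⟩ := Finset.mem_sdiff.mp hu
        have hune' : u ≠ i := by simpa using hune
        refine Finset.mem_filter.mpr ⟨Finset.mem_sdiff.mpr ⟨hΦmem u huS hune', ?_⟩, huS⟩
        intro huρW
        obtain ⟨j, hj, rfl⟩ := Finset.mem_image.mp huρW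
        exact hρ j hj huS
      · refine hgen (ρ i) ?_
        intro u hu
        obtain ⟨huS, hune⟩ := Finset.mem_sdiff.mp hu
        have hune' : u ≠ ρ i := by simpa using hune
        refine Finset.mem_filter.mpr ⟨Finset.mem_sdiff.mpr ⟨hSsubΦ i hiW huS, ?_⟩, huS⟩
        intro huρW
        obtain ⟨j, hj, hje⟩ := Finset.mem_image.mp huρW
        rcases eq_or_ne j i with rfl | hne
        · exact hune' hje.symm
        · exact hP2 j hj i hiW hne (hje ▸ huS)
    -- double counting
    have hswap : ∑ i ∈ X, (Φ'.filter (fun u => u ∈ S i)).card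
        = ∑ u ∈ Φ', (X.filter (fun i => u ∈ S i)).card := by
      simp only [Finset.card_filter]
      rw [Finset.sum_comm]
    have hup : ∑ u ∈ Φ', (X.filter (fun i => u ∈ S i)).card ≤ t * k * k := by
      calc ∑ u ∈ Φ', (X.filter (fun i => u ∈ S i)).card ≤ ∑ _u ∈ Φ', k := by
            refine Finset.sum_le_sum (fun u _ => ?_)
            calc (X.filter (fun i => u ∈ S i)).card
                ≤ (Finset.univ.filter (fun i => u ∈ S i)).card :=
                  Finset.card_le_card (Finset.filter_subset_filter _ (Finset.subset_univ X))
            _ = k := hout u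
      _ = Φ'.card * k := by rw [Finset.sum_const, smul_eq_mul]
      _ ≤ t * k * k := Nat.mul_le_mul_right k hΦ'card
    have hkey : (k - 1) * (T4.card + t) ≤ t * k * k := by
      calc (k - 1) * (T4.card + t) = ∑ _i ∈ X, (k - 1) := by
            rw [Finset.sum_const, hXcard, smul_eq_mul, Nat.mul_comm]
      _ ≤ ∑ i ∈ X, (Φ'.filter (fun u => u ∈ S i)).card := Finset.sum_le_sum hlow
      _ ≤ t * k * k := hswap ▸ hup
    set Dead := W ∪ ρW ∪ T3 ∪ T4 with hDeadDef
    have hDeadcard : (k - 1) * Dead.card ≤ t * (k * (2 * k - 1)) := by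
      have h1 : Dead.card ≤ t + t + t * (k - 1) + T4.card := by
        calc Dead.card ≤ (W ∪ ρW ∪ T3).card + T4.card := Finset.card_union_le _ _
        _ ≤ ((W ∪ ρW).card + T3.card) + T4.card := by
            exact Nat.add_le_add_right (Finset.card_union_le _ _) _
        _ ≤ ((W.card + ρW.card) + T3.card) + T4.card := by
            exact Nat.add_le_add_right (Nat.add_le_add_right (Finset.card_union_le _ _) _) _
        _ ≤ t + t + t * (k - 1) + T4.card := by
            rw [hcard, hρWcard]
            exact Nat.add_le_add_right (Nat.add_le_add_left hT3card _) _
      obtain ⟨a, rfl⟩ : ∃ a, k = a + 2 := ⟨k - 2, by omega⟩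
      have ha1 : a + 2 - 1 = a + 1 := by omega
      have ha2 : 2 * (a + 2) - 1 = 2 * a + 3 := by omega
      rw [ha1] at h1 hkey ⊢
      rw [ha2]
      nlinarith [hkey, h1, Nat.zero_le T4.card, Nat.zero_le t]
    have hlt : Dead.card < n := by
      have hCpos : 0 < k * (2 * k - 1) := by
        have : 0 < k := by omega
        have : 0 < 2 * k - 1 := by omega
        positivity
      have h3 : (k - 1) * Dead.card < (k - 1) * n := by
        calc (k - 1) * Dead.card ≤ t * (k * (2 * k - 1)) := hDeadcard
        _ < w * (k * (2 * k - 1)) := by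
            exact Nat.mul_lt_mul_of_lt_of_le (by omega) le_rfl hCpos
        _ ≤ (k - 1) * n := hw
      exact Nat.lt_of_mul_lt_mul_left h3
    obtain ⟨i, hi⟩ : ∃ i : Fin n, i ∉ Dead := by
      by_contra h
      push_neg at h
      have hsub : (Finset.univ : Finset (Fin n)) ⊆ Dead := fun i _ => h i
      have := Finset.card_le_card hsub
      rw [Finset.card_univ, Fintype.card_fin] at this
      omega
    have hiW : i ∉ W := fun h => hi (by simp [hDeadDef, h])
    have hiρW : i ∉ ρW := fun h => hi (by simp [hDeadDef, h])
    have hiT3 : i ∉ T3 := fun h => hi (by simp [hDeadDef, h])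
    have hiT4 : i ∉ T4 := fun h => hi (by simp [hDeadDef, h])
    have hiS : ∀ j ∈ W, ρ j ∉ S i := by
      intro j hj hmem
      exact hiT3 (by
        simp only [hT3, Finset.mem_filter, Finset.mem_univ, true_and]
        exact ⟨hiW, j, hj, hmem⟩)
    obtain ⟨u, huS, hune, huΦ⟩ : ∃ u, u ∈ S i ∧ u ≠ i ∧ u ∉ Φ := by
      by_contra h
      push_neg at h
      exact hiT4 (by
        simp only [hT4, Finset.mem_filter, Finset.mem_univ, true_and]
        exact ⟨hiW, hiS, h⟩)
    refine ⟨insert i W, Function.update ρ i u, ?_, ?_, ?_⟩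
    · rw [Finset.card_insert_of_notMem hiW, hcard]
    · intro j hj
      rcases Finset.mem_insert.mp hj with rfl | hjW
      · rw [Function.update_self]
        refine ⟨huS, hune, ?_⟩
        rw [Finset.mem_insert]
        rintro (h | h)
        · exact hune h
        · exact huΦ (hWsubΦ h)
      · have hne : j ≠ i := fun h => hiW (h ▸ hjW)
        rw [Function.update_of_ne hne]
        obtain ⟨a1, a2, a3⟩ := hP1 j hjW
        refine ⟨a1, a2, ?_⟩
        rw [Finset.mem_insert]
        rintro (h | h)
        · exact hiρW (h ▸ Finset.mem_image.mpr ⟨j, hjW, rfl⟩)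
        · exact a3 h
    · intro j hj j' hj' hne
      rcases Finset.mem_insert.mp hj with rfl | hjW
      · rcases Finset.mem_insert.mp hj' with rfl | hj'W
        · exact absurd rfl hne
        · rw [Function.update_self]
          exact fun h => huΦ (hSsubΦ j' hj'W h)
      · have hnej : j ≠ i := fun h => hiW (h ▸ hjW)
        rw [Function.update_of_ne hnej]
        rcases Finset.mem_insert.mp hj' with rfl | hj'W
        · exact hiS j hjW
        · exact hP2 j hjW j' hj'W hne


theorem stmt8 (k m n : ℕ) (hk : 2 ≤ k) (hm : 0 < m) (hkm : k ∣ m)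
    (hn : n = (k * (k - 1) + 1) * m)
    (F : Fin n → (Fin n → Bool) → Bool) (hF : IsKKXorBN k F) :
    ∃ U : Finset (Fin n), IsControlSet F U ∧
      (U.card : ℚ) ≤ (1 - ((k : ℚ) - 1) / ((k : ℚ) * ((k : ℚ) ^ 2 - (k : ℚ) + 1))) * n := by
  classical
  obtain ⟨hXor, hDeg⟩ := hF
  choose S hScard hSvar using hXor
  -- out-degree in terms of S
  have houtset : ∀ u : Fin n, outSet F u = ↑(Finset.univ.filter fun j => u ∈ S j) := by
    intro u
    ext j
    simp only [outSet, Set.mem_setOf_eq, Finset.coe_filter, Finset.mem_univ, true_and,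
      Set.mem_setOf_eq]
    exact depends_iff (hSvar j) u
  have hout : ∀ u : Fin n, (Finset.univ.filter fun j => u ∈ S j).card = k := by
    intro u
    have h := (hDeg u).2
    rw [houtset u, Set.ncard_coe_finset] at h
    exact h
  -- size parameters
  set m' := m / k with hm'
  have hmm : m = k * m' := (Nat.mul_div_cancel' hkm).symm
  set w := (k - 1) * m' with hwdef
  have hb : 2 * k - 1 ≤ k * (k - 1) + 1 := by
    have h2 : 2 * (k - 1) ≤ k * (k - 1) := Nat.mul_le_mul_right _ hk
    omega
  have hw : w * (k * (2 * k - 1)) ≤ (k - 1) * n := by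
    rw [hn, hmm, hwdef]
    calc (k - 1) * m' * (k * (2 * k - 1)) = ((k - 1) * m' * k) * (2 * k - 1) := by ring
    _ ≤ ((k - 1) * m' * k) * (k * (k - 1) + 1) := Nat.mul_le_mul_left _ hb
    _ = (k - 1) * ((k * (k - 1) + 1) * (k * m')) := by ring
  obtain ⟨W, ρ, hWcard, hP1, hP2⟩ := exists_W k hk S hScard hout w hw
  have hinj : ∀ j ∈ W, ∀ j' ∈ W, ρ j = ρ j' → j = j' := by
    intro j hj j' hj' he
    by_contra hne
    exact hP2 j hj j' hj' hne (he ▸ (hP1 j' hj').1)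
  refine ⟨Wᶜ, ?_, ?_⟩
  · -- IsControlSet
    intro x0 xT
    refine ⟨2, by norm_num, ?_⟩
    set c : Fin n → Bool := fun p => if p ∈ W then F p x0 else false with hc
    set x1 : Fin n → Bool := fun p =>
      if h : ∃ j, j ∈ W ∧ ρ j = p then
        (if F h.choose c = xT h.choose then c p else !(c p))
      else c p with hx1
    have hF2 : ∀ p : Fin n, (¬ ∃ j, j ∈ W ∧ ρ j = p) → x1 p = c p := by
      intro p hp
      rw [hx1]
      simp only [dif_neg hp]
    have hF1 : ∀ p ∈ W, x1 p = c p := by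
      intro p hp
      refine hF2 p ?_
      rintro ⟨j, hj, rfl⟩
      exact (hP1 j hj).2.2 hp
    have hF3 : ∀ j ∈ W, x1 (ρ j) = if F j c = xT j then c (ρ j) else !(c (ρ j)) := by
      intro j hj
      have hex : ∃ j', j' ∈ W ∧ ρ j' = ρ j := ⟨j, hj, rfl⟩
      rw [hx1]
      simp only [dif_pos hex]
      obtain ⟨hcw, hce⟩ := hex.choose_spec
      have : hex.choose = j := hinj _ hcw _ hj hce
      rw [this]
    have hF4 : ∀ j ∈ W, F j x1 = xT j := by
      intro j hj
      have hS := hSvar j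
      have hρS : ρ j ∈ S j := (hP1 j hj).1
      have hagree : ∀ q ∈ S j, q ≠ ρ j → x1 q = c q := by
        intro q hq hne
        refine hF2 q ?_
        rintro ⟨j', hj', rfl⟩
        rcases eq_or_ne j' j with rfl | h'
        · exact hne rfl
        · exact hP2 j' hj' j hj h' hq
      by_cases hcase : F j c = xT j
      · have hall : ∀ q ∈ S j, x1 q = c q := by
          intro q hq
          rcases eq_or_ne q (ρ j) with rfl | hne
          · rw [hF3 j hj, if_pos hcase]
          · exact hagree q hq hne
        rw [kxor_congr hS hall]
        exact hcase
      · have h1 : x1 (ρ j) = !(c (ρ j)) := by rw [hF3 j hj, if_neg hcase]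
        have hall : ∀ q ∈ S j, x1 q = Function.update c (ρ j) (!(c (ρ j))) q := by
          intro q hq
          rcases eq_or_ne q (ρ j) with rfl | hne
          · rw [h1, Function.update_self]
          · rw [Function.update_of_ne hne]
            exact hagree q hq hne
        rw [kxor_congr hS hall, kxor_flip hS hρS]
        revert hcase
        cases F j c <;> cases xT j <;> simp
    set u : ℕ → Fin n → Bool := fun t i =>
      if t = 0 then Bool.xor (x1 i) (F i x0) else Bool.xor (xT i) (F i x1) with hu
    refine ⟨u, ?_⟩
    have htraj1 : traj F Wᶜ u x0 1 = x1 := by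
      funext i
      show (if i ∈ Wᶜ then Bool.xor (u 0 i) (F i (traj F Wᶜ u x0 0)) else
        F i (traj F Wᶜ u x0 0)) = x1 i
      by_cases hiU : i ∈ Wᶜ
      · rw [if_pos hiU]
        show Bool.xor (Bool.xor (x1 i) (F i x0)) (F i x0) = x1 i
        cases x1 i <;> cases F i x0 <;> rfl
      · rw [if_neg hiU]
        have hiW : i ∈ W := by simpa using hiU
        show F i x0 = x1 i
        rw [hF1 i hiW, hc]
        simp [hiW]
      
    show traj F Wᶜ u x0 2 = xT
    funext i
    show (if i ∈ Wᶜ then Bool.xor (u 1 i) (F i (traj F Wᶜ u x0 1)) else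
      F i (traj F Wᶜ u x0 1)) = xT i
    rw [htraj1]
    by_cases hiU : i ∈ Wᶜ
    · rw [if_pos hiU]
      show Bool.xor (Bool.xor (xT i) (F i x1)) (F i x1) = xT i
      cases xT i <;> cases F i x1 <;> rfl
    · rw [if_neg hiU]
      have hiW : i ∈ W := by simpa using hiU
      exact hF4 i hiW
  · -- cardinality bound
    have hwn : w ≤ n := by
      rw [hn, hmm, hwdef]
      calc (k - 1) * m' ≤ (k * (k - 1) + 1) * m' := by
            exact Nat.mul_le_mul_right _ (by omega)
      _ ≤ (k * (k - 1) + 1) * (k * m') := by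
            refine Nat.mul_le_mul_left _ ?_
            exact Nat.le_mul_of_pos_left _ (by omega)
    have hUcard : (Wᶜ : Finset (Fin n)).card = n - w := by
      rw [Finset.card_compl, hWcard, Fintype.card_fin]
    rw [hUcard]
    have hK2 : (2 : ℚ) ≤ (k : ℚ) := by exact_mod_cast hk
    have hden : (k : ℚ) * ((k : ℚ) ^ 2 - (k : ℚ) + 1) ≠ 0 := by
      have h1 : (0:ℚ) < (k:ℚ) := by linarith
      have h2 : (0:ℚ) < (k : ℚ) ^ 2 - (k : ℚ) + 1 := by nlinarith
      positivity
    have hcast : ((n - w : ℕ) : ℚ) = (n : ℚ) - (w : ℚ) := Nat.cast_sub hwn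
    rw [hcast]
    have hwq : (w : ℚ) = ((k : ℚ) - 1) * (m' : ℚ) := by
      rw [hwdef]
      push_cast [Nat.cast_sub (by omega : 1 ≤ k)]
      ring
    have hnq : (n : ℚ) = ((k : ℚ) * ((k : ℚ) - 1) + 1) * ((k : ℚ) * (m' : ℚ)) := by
      rw [hn, hmm]
      push_cast [Nat.cast_sub (by omega : 1 ≤ k)]
      ring
    have heq : (1 - ((k : ℚ) - 1) / ((k : ℚ) * ((k : ℚ) ^ 2 - (k : ℚ) + 1))) * (n : ℚ)
        = (n : ℚ) - (w : ℚ) := by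
      rw [hnq, hwq]
      rw [sub_mul, one_mul, div_mul_eq_mul_div, sub_right_inj, div_eq_iff hden]
      ring
    rw [heq]

end BN
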